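/- Let C ⊆ 𝐒 be balanced, and assume that for some N > 0 the element N − x_1² − ⋯ − x_n² of ℝ⟨x⟩ is a conic combination of elements of C ∩ ℝ⟨x⟩_2 and hermitian squares pp⋆ with p ∈ ℝ⟨x⟩_1. Let a ∈ 𝒮_{2d} and suppose a_{min,d} = sup{m ∈ ℝ : a − m ∈ M(C)_d} is finite. Then there exists L ∈ (M(C)_d)^∨ with L(1) = 1 and L(a) = a_{min,d}; consequently inf{L(a) : L ∈ (M(C)_d)^∨, L(1) = 1} = a_{min,d}, i.e., strong duality holds. -/

import Mathlib

open scoped BigOperators Matrix Kronecker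

namespace StatePoly

/-! ### Words and symmetrized words -/

/-- Words in the letters `x_1, …, x_n`: the free monoid on `Fin n`. -/
abbrev Word (n : ℕ) := FreeMonoid (Fin n)

/-- The word reversal (the involution `⋆` on words). -/
def wordRev {n : ℕ} (w : Word n) : Word n := FreeMonoid.reverse w

/-- Two nonempty words are identified iff they are equal or reverses of each other;
this realizes the relation `ς(w) = ς(w⋆)`. -/
def wordSetoid (n : ℕ) : Setoid {l : List (Fin n) // l ≠ []} where
  r u v := u.1 = v.1 ∨ u.1 = v.1.reverse
  iseqv := by
    constructor
    · intro u; exact Or.inl rfl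
    · rintro u v (h | h)
      · exact Or.inl h.symm
      · right; rw [h, List.reverse_reverse]
    · rintro u v w (h1 | h1) (h2 | h2)
      · exact Or.inl (h1.trans h2)
      · right; rw [h1, h2]
      · right; rw [h1, h2]
      · left; rw [h1, h2, List.reverse_reverse]

/-- Symbols `ς(w)`, `w` a nonempty word, modulo `ς(w) = ς(w⋆)`. -/
def SW (n : ℕ) := Quotient (wordSetoid n)

/-- The commutative algebra `𝒮` of state polynomials:
a polynomial ring in the symbols `ς(w)`. -/
abbrev SPoly (n : ℕ) := MvPolynomial (SW n) ℝ

/-- The algebra `𝐒 = 𝒮 ⊗ ℝ⟨x⟩` of nc state polynomials, realized as the monoid algebra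
of the free monoid over the polynomial ring `𝒮`. -/
abbrev NCSPoly (n : ℕ) := MonoidAlgebra (SPoly n) (Word n)

variable {n : ℕ}

/-- The state symbol `ς(w)` of a word, with `ς(1) = 1`. -/
noncomputable def sigWordL (l : List (Fin n)) : SPoly n :=
  if h : l = [] then 1 else MvPolynomial.X (Quotient.mk (wordSetoid n) ⟨l, h⟩)

/-- The unital `𝒮`-linear map `ς : 𝐒 → 𝒮`. -/
noncomputable def sig (f : NCSPoly n) : SPoly n :=
  Finsupp.sum f.coeff fun w c => c * sigWordL (FreeMonoid.toList w)

/-- The involution `⋆` on `𝐒`: it fixes `𝒮 ∪ {x_1, …, x_n}` pointwise and reverses words. -/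
noncomputable def ncStar (f : NCSPoly n) : NCSPoly n :=
  MonoidAlgebra.ofCoeff (Finsupp.mapDomain wordRev f.coeff)

/-- The embedding `𝒮 ⊆ 𝐒`. -/
noncomputable def iotaS (p : SPoly n) : NCSPoly n := MonoidAlgebra.single 1 p

/-- The variable `x_i` as an nc state polynomial. -/
noncomputable def ncX (i : Fin n) : NCSPoly n := MonoidAlgebra.single (FreeMonoid.of i) 1

/-- A real constant as an nc state polynomial. -/
noncomputable def ncConst (r : ℝ) : NCSPoly n := iotaS (MvPolynomial.C r)

/-- `f ∈ 𝐒` lies in the free algebra `ℝ⟨x⟩ ⊆ 𝐒` iff all its coefficients are real constants. -/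
def IsFreePoly (f : NCSPoly n) : Prop := ∀ w : Word n, ∃ r : ℝ, f.coeff w = MvPolynomial.C r

/-! ### Degrees -/

/-- `|w|` on symmetrized words. -/
def swDeg : SW n → ℕ :=
  Quotient.lift (fun l : {l : List (Fin n) // l ≠ []} => l.1.length)
    (by rintro u v (h | h) <;> simp [h])

/-- The degree of a monomial `∏ ς(u_j)^{e_j}`, namely `∑ e_j |u_j|`. -/
def monoWeight (m : SW n →₀ ℕ) : ℕ := m.sum fun q e => e * swDeg q

/-- The degree of a state polynomial. -/
noncomputable def sDeg (p : SPoly n) : ℕ := p.support.sup monoWeight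

/-- The degree of an nc state polynomial: the maximum over the `𝐒`-words appearing in it of
`deg ς(u_1)⋯ς(u_m)v = |v| + ∑_j |u_j|`. -/
noncomputable def ncDeg (f : NCSPoly n) : ℕ :=
  (Finsupp.support f.coeff).sup fun w => sDeg (f.coeff w) + (FreeMonoid.toList w).length

lemma sDeg_zero : sDeg (0 : SPoly n) = 0 := by
  simp [sDeg, MvPolynomial.support_zero]

lemma sDeg_add_le (p q : SPoly n) : sDeg (p + q) ≤ max (sDeg p) (sDeg q) := by
  classical
  refine Finset.sup_le fun m hm => ?_
  rcases Finset.mem_union.mp (MvPolynomial.support_add hm) with h | h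
  · exact le_max_of_le_left (Finset.le_sup h)
  · exact le_max_of_le_right (Finset.le_sup h)

lemma sDeg_smul_le (c : ℝ) (p : SPoly n) : sDeg (c • p) ≤ sDeg p :=
  Finset.sup_le fun _m hm => Finset.le_sup (MvPolynomial.support_smul hm)

lemma sDeg_one : sDeg (1 : SPoly n) = 0 := by
  classical
  refine le_antisymm (Finset.sup_le fun m hm => ?_) (Nat.zero_le _)
  have : m = 0 := by
    by_contra h
    have := MvPolynomial.mem_support_iff.mp hm
    rw [MvPolynomial.coeff_one, if_neg (fun he => h he.symm)] at this
    exact this rfl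
  subst this
  simp [monoWeight]

/-- The subspace `𝒮_{k}` of state polynomials of degree at most `k`. -/
noncomputable def SPolyLe (n k : ℕ) : Submodule ℝ (SPoly n) where
  carrier := {p | sDeg p ≤ k}
  add_mem' := fun {p q} hp hq =>
    le_trans (sDeg_add_le p q) (max_le hp hq)
  zero_mem' := by simp [Set.mem_setOf_eq, sDeg_zero]
  smul_mem' := fun c p hp => le_trans (sDeg_smul_le c p) hp

lemma one_mem_SPolyLe (k : ℕ) : (1 : SPoly n) ∈ SPolyLe n k := by
  show sDeg (1 : SPoly n) ≤ k
  simp [sDeg_one]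

/-- Extension by zero of a linear functional on `𝒮_{k}` to `𝒮`
(used to refer to values of truncated functionals). -/
noncomputable def lext {n k : ℕ} (L : SPolyLe n k →ₗ[ℝ] ℝ) (p : SPoly n) : ℝ :=
  if h : sDeg p ≤ k then L ⟨p, h⟩ else 0

/-! ### Evaluations -/

section Eval

variable {A : Type*} [Ring A] [Module ℝ A]

/-- Evaluation of a word at a tuple `X`. -/
noncomputable def wEvalL (X : Fin n → A) (l : List (Fin n)) : A := (l.map X).prod

/-- The value assigned to the symbol `ς(w)`: `λ(w(X))`. -/
noncomputable def stVal (lam : A → ℝ) (X : Fin n → A) (q : SW n) : ℝ :=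
  lam (wEvalL X (Quotient.out q).1)

/-- Evaluation `a(λ; X) ∈ ℝ` of a state polynomial. -/
noncomputable def sEval (lam : A → ℝ) (X : Fin n → A) (p : SPoly n) : ℝ :=
  MvPolynomial.eval (stVal lam X) p

/-- Evaluation `f(λ; X) ∈ A` of an nc state polynomial. -/
noncomputable def ncEval (lam : A → ℝ) (X : Fin n → A) (f : NCSPoly n) : A :=
  Finsupp.sum f.coeff fun w c => sEval lam X c • wEvalL X (FreeMonoid.toList w)

end Eval

/-! ### States on matrix algebras -/

/-- A density matrix: positive semidefinite with trace 1. -/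
def IsDensity {k : ℕ} (ρ : Matrix (Fin k) (Fin k) ℝ) : Prop :=
  ρ.PosSemidef ∧ ρ.trace = 1

/-- The state on `k×k` matrices induced by a density matrix. -/
noncomputable def matState {k : ℕ} (ρ : Matrix (Fin k) (Fin k) ℝ) :
    Matrix (Fin k) (Fin k) ℝ → ℝ := fun Y => (ρ * Y).trace

/-- The vector state on `k×k` matrices induced by a vector `ψ`. -/
noncomputable def vecStateM {k : ℕ} (ψ : Fin k → ℝ) :
    Matrix (Fin k) (Fin k) ℝ → ℝ := fun Y => ψ ⬝ᵥ Y.mulVec ψ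

/-! ### States on B(H) -/

section Op

variable (H : Type*) [NormedAddCommGroup H] [InnerProductSpace ℝ H] [CompleteSpace H]

/-- A state on `B(H)`: a unital positive `⋆`-linear functional. -/
def IsState (lam : (H →L[ℝ] H) →ₗ[ℝ] ℝ) : Prop :=
  lam 1 = 1 ∧ (∀ Y : H →L[ℝ] H, lam (ContinuousLinearMap.adjoint Y) = lam Y) ∧
    ∀ Y : H →L[ℝ] H, 0 ≤ lam (Y * ContinuousLinearMap.adjoint Y)

/-- A vector state on `B(H)`. -/
def IsVecState (lam : (H →L[ℝ] H) →ₗ[ℝ] ℝ) : Prop :=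
  ∃ v : H, ‖v‖ = 1 ∧ ∀ Y : H →L[ℝ] H, lam Y = inner ℝ (Y v) v

/-- The state semialgebraic set `𝒟_C^∞` determined by the constraint set `C ⊆ 𝐒`. -/
def DCinf (C : Set (NCSPoly n)) :
    Set ((((H →L[ℝ] H) →ₗ[ℝ] ℝ)) × (Fin n → (H →L[ℝ] H))) :=
  {p | IsState H p.1 ∧ (∀ i, ContinuousLinearMap.adjoint (p.2 i) = p.2 i) ∧
    ∀ c ∈ C, (ncEval (⇑p.1) p.2 c).IsPositive}

/-- The subset `vec-𝒟_C^∞` of `𝒟_C^∞` in which the state is a vector state. -/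
def vecDCinf (C : Set (NCSPoly n)) :
    Set ((((H →L[ℝ] H) →ₗ[ℝ] ℝ)) × (Fin n → (H →L[ℝ] H))) :=
  {p ∈ DCinf H C | IsVecState H p.1}

end Op

/-! ### Positivity structures -/

/-- `Ω`: sums of products of elements `ς(h h⋆)`, `h ∈ 𝐒`. -/
def Omega (n : ℕ) : Set (SPoly n) :=
  {x | ∃ (m : ℕ) (g : Fin m → SPoly n),
    (∀ i, ∃ (mi : ℕ) (h : Fin mi → NCSPoly n), g i = ∏ j, sig (h j * ncStar (h j))) ∧
    x = ∑ i, g i}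

/-- Membership in the smallest subset of `𝒮` containing `{1} ∪ S` that is closed under
addition and under multiplication by squares of elements of `A`. -/
inductive QMemIn (A S : Set (SPoly n)) : SPoly n → Prop
  | base {s : SPoly n} : s ∈ insert (1 : SPoly n) S → QMemIn A S s
  | add {p q : SPoly n} : QMemIn A S p → QMemIn A S q → QMemIn A S (p + q)
  | mul_sq {a p : SPoly n} : a ∈ A → QMemIn A S p → QMemIn A S (a ^ 2 * p)

/-- The quadratic module generated by `S` in `𝒮`. -/
def QM (S : Set (SPoly n)) : Set (SPoly n) := {x | QMemIn Set.univ S x}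

/-- The set `C^ς = {ς(p c p⋆) : p ∈ ℝ⟨x⟩, c ∈ {1} ∪ C}`. -/
def Csig (C : Set (NCSPoly n)) : Set (SPoly n) :=
  {x | ∃ p : NCSPoly n, IsFreePoly p ∧ ∃ c ∈ insert (1 : NCSPoly n) C,
    x = sig (p * c * ncStar p)}

/-- A balanced constraint set: closed under `⋆`, and non-symmetric elements come in `±` pairs. -/
def Balanced (C : Set (NCSPoly n)) : Prop :=
  (∀ c ∈ C, ncStar c ∈ C) ∧ ∀ c ∈ C, c ≠ ncStar c → -c ∈ C

/-- An algebraically bounded constraint set: `N - x_1^2 - ⋯ - x_n^2 = ∑ p_i c_i p_i⋆` with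
`c_i ∈ {1} ∪ C ∩ ℝ⟨x⟩` and `p_i ∈ ℝ⟨x⟩`. -/
def AlgBounded (C : Set (NCSPoly n)) : Prop :=
  ∃ N : ℝ, 0 < N ∧ ∃ (m : ℕ) (p c : Fin m → NCSPoly n),
    (∀ i, IsFreePoly (p i)) ∧
    (∀ i, c i = 1 ∨ (c i ∈ C ∧ IsFreePoly (c i))) ∧
    ncConst N - ∑ j : Fin n, ncX j ^ 2 = ∑ i, p i * c i * ncStar (p i)

/-- The truncated quadratic module `M(C)_d`. -/
def MCd (C : Set (NCSPoly n)) (d : ℕ) : Set (SPoly n) :=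
  {x | ∃ (K : ℕ) (f c : Fin K → NCSPoly n),
    (∀ i, c i ∈ insert (1 : NCSPoly n) C) ∧
    (∀ i, ncDeg (f i * c i * ncStar (f i)) ≤ 2 * d) ∧
    x = ∑ i, sig (f i * c i * ncStar (f i))}

end StatePoly

namespace StatePoly

/-- Membership of a truncated linear functional `L : 𝒮_{2d} → ℝ` in the dual cone
`(M(C)_d)^∨`: `L(ς(f c f⋆)) ≥ 0` for all `c ∈ {1} ∪ C` and `f ∈ 𝐒` with
`deg(f c f⋆) ≤ 2d` (values of `L` referred to via the extension-by-zero `lext`). -/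
def InDualCone {n : ℕ} (d : ℕ) (C : Set (NCSPoly n))
    (L : SPolyLe n (2 * d) →ₗ[ℝ] ℝ) : Prop :=
  ∀ f c : NCSPoly n, c ∈ insert (1 : NCSPoly n) C →
    ncDeg (f * c * ncStar f) ≤ 2 * d → 0 ≤ lext L (sig (f * c * ncStar f))

/-- The strengthened boundedness hypothesis: for some `N > 0`, the element
`N − x₁² − ⋯ − xₙ²` is a conic combination of elements of `C ∩ ℝ⟨x⟩_2` and hermitian
squares `pp⋆` with `p ∈ ℝ⟨x⟩_1`. -/
def StrongBounded {n : ℕ} (C : Set (NCSPoly n)) : Prop :=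
  ∃ N : ℝ, 0 < N ∧ ∃ (m : ℕ) (t : Fin m → ℝ) (g : Fin m → NCSPoly n),
    (∀ i, 0 ≤ t i) ∧
    (∀ i, (g i ∈ C ∧ IsFreePoly (g i) ∧ ncDeg (g i) ≤ 2) ∨
      (∃ p : NCSPoly n, IsFreePoly p ∧ ncDeg p ≤ 1 ∧ g i = p * ncStar p)) ∧
    ncConst N - ∑ j : Fin n, ncX j ^ 2 = ∑ i, ncConst (t i) * g i

/-! ### Auxiliary lemmas -/

open MvPolynomial in
lemma monoWeight_add {n : ℕ} (a b : SW n →₀ ℕ) :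
    monoWeight (a + b) = monoWeight a + monoWeight b := by
  classical
  unfold monoWeight
  apply Finsupp.sum_add_index' <;> intros <;> simp [add_mul]

lemma sDeg_mul_le {n : ℕ} (p q : SPoly n) : sDeg (p * q) ≤ sDeg p + sDeg q := by
  classical
  refine Finset.sup_le fun m hm => ?_
  have h := MvPolynomial.support_mul p q hm
  rw [Finset.mem_add] at h
  obtain ⟨m₁, h₁, m₂, h₂, rfl⟩ := h
  rw [monoWeight_add]
  exact add_le_add (Finset.le_sup h₁) (Finset.le_sup h₂)

lemma sDeg_C {n : ℕ} (r : ℝ) : sDeg (MvPolynomial.C r : SPoly n) = 0 := by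
  classical
  refine Nat.le_zero.mp (Finset.sup_le fun m hm => ?_)
  have hm' := MvPolynomial.mem_support_iff.mp hm
  rw [MvPolynomial.coeff_C] at hm'
  have : (0 : SW n →₀ ℕ) = m := by
    by_contra h; rw [if_neg h] at hm'; exact hm' rfl
  subst this
  simp [monoWeight]

lemma sDeg_sum_le_of {n : ℕ} {ι : Type*} {s : Finset ι} {F : ι → SPoly n} {k D : ℕ} (hk : k ≤ D)
    (h : ∀ i ∈ s, sDeg (F i) + k ≤ D) : sDeg (∑ i ∈ s, F i) + k ≤ D := by
  classical
  induction s using Finset.induction_on with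
  | empty => simpa [sDeg_zero] using hk
  | insert a s ha ih =>
    rw [Finset.sum_insert ha]
    calc sDeg (F a + ∑ i ∈ s, F i) + k ≤ max (sDeg (F a)) (sDeg (∑ i ∈ s, F i)) + k := by
          exact Nat.add_le_add_right (sDeg_add_le _ _) k
      _ = max (sDeg (F a) + k) (sDeg (∑ i ∈ s, F i) + k) := by
          rw [Nat.add_max_add_right]
      _ ≤ D := max_le (h _ (Finset.mem_insert_self a s))
          (ih fun i hi => h i (Finset.mem_insert_of_mem hi))

lemma sigWordL_nil {n : ℕ} : sigWordL ([] : List (Fin n)) = 1 := dif_pos rfl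

lemma sigWordL_reverse {n : ℕ} (l : List (Fin n)) : sigWordL l.reverse = sigWordL l := by
  rcases eq_or_ne l [] with rfl | h
  · simp
  · have h' : l.reverse ≠ [] := by simpa using h
    rw [sigWordL, sigWordL, dif_neg h', dif_neg h]
    congr 1
    exact Quotient.sound (Or.inr rfl)

lemma swDeg_mk {n : ℕ} (u : {l : List (Fin n) // l ≠ []}) :
    swDeg (Quotient.mk (wordSetoid n) u) = u.1.length := rfl

lemma sDeg_sigWordL_le {n : ℕ} (l : List (Fin n)) : sDeg (sigWordL l) ≤ l.length := by
  classical
  rcases eq_or_ne l [] with rfl | h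
  · simp [sigWordL_nil, sDeg_one]
  · rw [sigWordL, dif_neg h]
    refine Finset.sup_le fun m hm => ?_
    have hm' := MvPolynomial.mem_support_iff.mp hm
    rw [MvPolynomial.coeff_X' (R := ℝ) (σ := SW n) (Quotient.mk (wordSetoid n) ⟨l, h⟩) m] at hm'
    have : Finsupp.single (α := SW n) (Quotient.mk (wordSetoid n) ⟨l, h⟩) 1 = m := by
      by_contra hc; rw [if_neg hc] at hm'; exact hm' rfl
    subst this
    rw [monoWeight]
    exact (Finsupp.sum_single_index (h := fun q e => e * swDeg q) (by simp)).trans_le (by rw [one_mul, swDeg_mk])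

lemma sig_zero {n : ℕ} : sig (0 : NCSPoly n) = 0 := by
  unfold sig; rw [MonoidAlgebra.coeff_zero]; exact Finsupp.sum_zero_index

lemma sig_add {n : ℕ} (f g : NCSPoly n) : sig (f + g) = sig f + sig g := by
  unfold sig; rw [MonoidAlgebra.coeff_add]; exact Finsupp.sum_add_index' (fun _ => zero_mul _) (fun _ b₁ b₂ => add_mul b₁ b₂ _)

lemma sig_single {n : ℕ} (w : Word n) (p : SPoly n) :
    sig (MonoidAlgebra.single w p) = p * sigWordL (FreeMonoid.toList w) := by
  unfold sig; rw [MonoidAlgebra.coeff_single]; exact Finsupp.sum_single_index (zero_mul _)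

lemma sig_smul {n : ℕ} (r : ℝ) (f : NCSPoly n) : sig (r • f) = r • sig f := by
  have h1 := Finsupp.sum_smul_index' (g := f.coeff) (b := r)
    (h := fun w c => c * sigWordL (FreeMonoid.toList w)) (fun w => zero_mul _)
  unfold sig
  rw [MonoidAlgebra.coeff_smul, h1, Finsupp.smul_sum]
  exact Finsupp.sum_congr fun w _ => smul_mul_assoc r _ _

lemma sig_neg {n : ℕ} (f : NCSPoly n) : sig (-f) = -sig f := by
  have := sig_smul (-1 : ℝ) f
  simpa using this

lemma sig_sub {n : ℕ} (f g : NCSPoly n) : sig (f - g) = sig f - sig g := by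
  rw [sub_eq_add_neg, sig_add, sig_neg, sub_eq_add_neg]

lemma sig_sum {n : ℕ} {ι : Type*} (s : Finset ι) (F : ι → NCSPoly n) :
    sig (∑ i ∈ s, F i) = ∑ i ∈ s, sig (F i) := by
  classical
  induction s using Finset.induction_on with
  | empty => simpa using sig_zero
  | insert a s ha ih => rw [Finset.sum_insert ha, Finset.sum_insert ha, sig_add, ih]

lemma ncStar_single {n : ℕ} (w : Word n) (p : SPoly n) :
    ncStar (MonoidAlgebra.single w p) = MonoidAlgebra.single (wordRev w) p := by
  unfold ncStar; rw [MonoidAlgebra.coeff_single, Finsupp.mapDomain_single]; rfl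

lemma ncStar_zero {n : ℕ} : ncStar (0 : NCSPoly n) = 0 := by
  unfold ncStar; rw [MonoidAlgebra.coeff_zero, Finsupp.mapDomain_zero]; rfl

lemma ncStar_add {n : ℕ} (f g : NCSPoly n) : ncStar (f + g) = ncStar f + ncStar g := by
  unfold ncStar; rw [MonoidAlgebra.coeff_add, Finsupp.mapDomain_add]; rfl

lemma ncStar_smul {n : ℕ} (r : ℝ) (f : NCSPoly n) : ncStar (r • f) = r • ncStar f := by
  unfold ncStar; rw [MonoidAlgebra.coeff_smul, Finsupp.mapDomain_smul]; rfl

lemma ncStar_sub {n : ℕ} (f g : NCSPoly n) : ncStar (f - g) = ncStar f - ncStar g := by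
  have h := ncStar_smul (-1 : ℝ) g
  simp only [neg_one_smul] at h
  rw [sub_eq_add_neg, ncStar_add, h, sub_eq_add_neg]

lemma wordRev_mul {n : ℕ} (u v : Word n) : wordRev (u * v) = wordRev v * wordRev u :=
  FreeMonoid.reverse_mul

lemma ncStar_mul {n : ℕ} (f g : NCSPoly n) : ncStar (f * g) = ncStar g * ncStar f := by
  induction f using MonoidAlgebra.induction_linear with
  | zero => simp [ncStar_zero]
  | add f₁ f₂ h₁ h₂ => rw [add_mul, ncStar_add, h₁, h₂, ncStar_add, mul_add]
  | single w p =>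
    induction g using MonoidAlgebra.induction_linear with
    | zero => simp [ncStar_zero]
    | add g₁ g₂ h₁ h₂ => rw [mul_add, ncStar_add, h₁, h₂, ncStar_add, add_mul]
    | single v q =>
      show ncStar (MonoidAlgebra.single w p * MonoidAlgebra.single v q) = _
      rw [MonoidAlgebra.single_mul_single, ncStar_single, ncStar_single, ncStar_single,
        MonoidAlgebra.single_mul_single, wordRev_mul, mul_comm q p]
lemma ncDeg_le_iff {n : ℕ} {f : NCSPoly n} {D : ℕ} :
    ncDeg f ≤ D ↔ ∀ w ∈ f.coeff.support, sDeg (f.coeff w) + (FreeMonoid.toList w).length ≤ D :=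
  Finset.sup_le_iff

lemma ncDeg_single_le {n : ℕ} (w : Word n) (p : SPoly n) :
    ncDeg (MonoidAlgebra.single w p) ≤ sDeg p + (FreeMonoid.toList w).length := by
  classical
  rw [ncDeg_le_iff]
  intro v hv
  have hv' : v = w := Finset.mem_singleton.mp (Finsupp.support_single_subset hv)
  subst hv'
  rw [MonoidAlgebra.coeff_single, Finsupp.single_eq_same]

lemma le_ncDeg {n : ℕ} {f : NCSPoly n} {w : Word n} (h : f.coeff w ≠ 0) :
    sDeg (f.coeff w) + (FreeMonoid.toList w).length ≤ ncDeg f :=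
  Finset.le_sup (f := fun w => sDeg (f.coeff w) + (FreeMonoid.toList w).length)
    (Finsupp.mem_support_iff.mpr h)

lemma ncDeg_add_le {n : ℕ} (f g : NCSPoly n) : ncDeg (f + g) ≤ max (ncDeg f) (ncDeg g) := by
  classical
  rw [ncDeg_le_iff]
  intro w hw
  have hne : f.coeff w + g.coeff w ≠ 0 := by
    have := Finsupp.mem_support_iff.mp hw
    rwa [MonoidAlgebra.coeff_add, Finsupp.add_apply] at this
  have happ : (f + g).coeff w = f.coeff w + g.coeff w := by
    rw [MonoidAlgebra.coeff_add, Finsupp.add_apply]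
  rw [happ]
  by_cases hf0 : f.coeff w = 0
  · have hg0 : g.coeff w ≠ 0 := by rw [hf0, zero_add] at hne; exact hne
    rw [hf0, zero_add]
    exact le_max_of_le_right (le_ncDeg hg0)
  · by_cases hg0 : g.coeff w = 0
    · rw [hg0, add_zero]
      exact le_max_of_le_left (le_ncDeg hf0)
    · refine le_trans (Nat.add_le_add_right (sDeg_add_le _ _) _) ?_
      rw [← Nat.add_max_add_right]
      exact max_le_max (le_ncDeg hf0) (le_ncDeg hg0)

lemma ncDeg_smul_le {n : ℕ} (r : ℝ) (f : NCSPoly n) : ncDeg (r • f) ≤ ncDeg f := by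
  classical
  rw [ncDeg_le_iff]
  intro w hw
  have hsupp : w ∈ f.coeff.support := Finsupp.support_smul hw
  have happ : (r • f).coeff w = r • f.coeff w := MonoidAlgebra.coeff_smul_apply r f w
  rw [happ]
  refine le_trans (Nat.add_le_add_right (sDeg_smul_le r (f.coeff w)) _) ?_
  exact Finset.le_sup (f := fun w => sDeg (f.coeff w) + (FreeMonoid.toList w).length) hsupp

lemma ncDeg_neg {n : ℕ} (f : NCSPoly n) : ncDeg (-f) ≤ ncDeg f := by
  have h := ncDeg_smul_le (-1 : ℝ) f
  simpa using h

lemma ncDeg_sub_le {n : ℕ} (f g : NCSPoly n) : ncDeg (f - g) ≤ max (ncDeg f) (ncDeg g) := by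
  rw [sub_eq_add_neg]
  exact le_trans (ncDeg_add_le f (-g)) (max_le_max le_rfl (ncDeg_neg g))

lemma ncDeg_one {n : ℕ} : ncDeg (1 : NCSPoly n) = 0 := by
  refine Nat.le_zero.mp ?_
  have : (1 : NCSPoly n) = MonoidAlgebra.single 1 1 := MonoidAlgebra.one_def
  rw [this]
  have h := ncDeg_single_le (1 : Word n) (1 : SPoly n)
  simpa [sDeg_one, FreeMonoid.toList_one] using h

lemma ncDeg_mul_le {n : ℕ} (f g : NCSPoly n) : ncDeg (f * g) ≤ ncDeg f + ncDeg g := by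
  classical
  rw [ncDeg_le_iff]
  intro x hx
  have hx' := MonoidAlgebra.support_coeff_mul_subset f g hx
  rw [Finset.mem_mul] at hx'
  obtain ⟨y, hy, z, hz, hyz⟩ := hx'
  have hylen : (FreeMonoid.toList y).length ≤ ncDeg f :=
    le_trans (Nat.le_add_left _ _)
      (Finset.le_sup (f := fun w => sDeg (f.coeff w) + (FreeMonoid.toList w).length) hy)
  have hzlen : (FreeMonoid.toList z).length ≤ ncDeg g :=
    le_trans (Nat.le_add_left _ _)
      (Finset.le_sup (f := fun w => sDeg (g.coeff w) + (FreeMonoid.toList w).length) hz)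
  have hk : (FreeMonoid.toList x).length ≤ ncDeg f + ncDeg g := by
    rw [← hyz, FreeMonoid.toList_mul, List.length_append]
    exact add_le_add hylen hzlen
  have happ : (f * g).coeff x = f.coeff.sum fun a₁ b₁ => g.coeff.sum fun a₂ b₂ =>
      if a₁ * a₂ = x then b₁ * b₂ else 0 := MonoidAlgebra.coeff_mul f g x
  rw [happ]
  unfold Finsupp.sum
  refine sDeg_sum_le_of hk fun a₁ h₁ => ?_
  refine sDeg_sum_le_of hk fun a₂ h₂ => ?_
  beta_reduce
  by_cases he : a₁ * a₂ = x
  · rw [if_pos he, ← he, FreeMonoid.toList_mul, List.length_append]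
    calc sDeg (f.coeff a₁ * g.coeff a₂) + ((FreeMonoid.toList a₁).length + (FreeMonoid.toList a₂).length)
        ≤ (sDeg (f.coeff a₁) + sDeg (g.coeff a₂)) + ((FreeMonoid.toList a₁).length
          + (FreeMonoid.toList a₂).length) := Nat.add_le_add_right (sDeg_mul_le _ _) _
      _ = (sDeg (f.coeff a₁) + (FreeMonoid.toList a₁).length)
          + (sDeg (g.coeff a₂) + (FreeMonoid.toList a₂).length) := by ring
      _ ≤ ncDeg f + ncDeg g := add_le_add
          (Finset.le_sup (f := fun w => sDeg (f.coeff w) + (FreeMonoid.toList w).length) h₁)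
          (Finset.le_sup (f := fun w => sDeg (g.coeff w) + (FreeMonoid.toList w).length) h₂)
  · rw [if_neg he]
    simpa [sDeg_zero] using hk

lemma ncDeg_ncStar_le {n : ℕ} (f : NCSPoly n) : ncDeg (ncStar f) ≤ ncDeg f := by
  classical
  rw [ncDeg_le_iff]
  intro w hw
  have hinj : Function.Injective (wordRev (n := n)) := by
    intro u v h
    have : wordRev (wordRev u) = wordRev (wordRev v) := by rw [h]
    simpa [wordRev, FreeMonoid.reverse_reverse] using this
  have hsupp : w ∈ (f.coeff.support).image (wordRev (n := n)) :=
    Finsupp.mapDomain_support hw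
  obtain ⟨v, hv, rfl⟩ := Finset.mem_image.mp hsupp
  have happ : (ncStar f).coeff (wordRev v) = f.coeff v := Finsupp.mapDomain_apply hinj f.coeff v
  rw [happ]
  have hlen : (FreeMonoid.toList (wordRev v)).length = (FreeMonoid.toList v).length := by
    exact List.length_reverse
  rw [hlen]
  exact Finset.le_sup (f := fun w => sDeg (f.coeff w) + (FreeMonoid.toList w).length) hv

lemma sDeg_sig_le {n : ℕ} (f : NCSPoly n) : sDeg (sig f) ≤ ncDeg f := by
  classical
  have h : sDeg (sig f) + 0 ≤ ncDeg f := by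
    unfold sig Finsupp.sum
    refine sDeg_sum_le_of (Nat.zero_le _) fun w hw => ?_
    rw [Nat.add_zero]
    calc sDeg (f.coeff w * sigWordL (FreeMonoid.toList w))
        ≤ sDeg (f.coeff w) + (FreeMonoid.toList w).length :=
          le_trans (sDeg_mul_le _ _) (Nat.add_le_add_left (sDeg_sigWordL_le _) _)
      _ ≤ ncDeg f :=
          Finset.le_sup (f := fun w => sDeg (f.coeff w) + (FreeMonoid.toList w).length) hw
  simpa using h
section MCdLemmas

variable {n : ℕ} {C : Set (NCSPoly n)} {d : ℕ}

lemma MCd_zero : (0 : SPoly n) ∈ MCd C d :=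
  ⟨0, (fun i => i.elim0), (fun i => i.elim0), fun i => i.elim0, fun i => i.elim0, by simp⟩

lemma MCd_mem_single {f c : NCSPoly n} (hc : c ∈ insert (1 : NCSPoly n) C)
    (hdeg : ncDeg (f * c * ncStar f) ≤ 2 * d) : sig (f * c * ncStar f) ∈ MCd C d :=
  ⟨1, (fun _ => f), (fun _ => c), fun _ => hc, fun _ => hdeg, by rw [Fin.sum_univ_one]⟩

lemma MCd_add {x y : SPoly n} (hx : x ∈ MCd C d) (hy : y ∈ MCd C d) : x + y ∈ MCd C d := by
  obtain ⟨K₁, f₁, c₁, hc₁, hd₁, rfl⟩ := hx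
  obtain ⟨K₂, f₂, c₂, hc₂, hd₂, rfl⟩ := hy
  refine ⟨K₁ + K₂, Fin.addCases f₁ f₂, Fin.addCases c₁ c₂, fun i => ?_, fun i => ?_, ?_⟩
  · refine Fin.addCases (fun j => ?_) (fun j => ?_) i <;>
      simp only [Fin.addCases_left, Fin.addCases_right]
    · exact hc₁ j
    · exact hc₂ j
  · refine Fin.addCases (fun j => ?_) (fun j => ?_) i <;>
      simp only [Fin.addCases_left, Fin.addCases_right]
    · exact hd₁ j
    · exact hd₂ j
  · rw [Fin.sum_univ_add]
    simp only [Fin.addCases_left, Fin.addCases_right]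

lemma MCd_smul {t : ℝ} (ht : 0 ≤ t) {x : SPoly n} (hx : x ∈ MCd C d) : t • x ∈ MCd C d := by
  obtain ⟨K, f, c, hc, hd, rfl⟩ := hx
  have key : ∀ i, (Real.sqrt t • f i) * c i * ncStar (Real.sqrt t • f i)
      = t • (f i * c i * ncStar (f i)) := by
    intro i
    rw [ncStar_smul, smul_mul_assoc, smul_mul_assoc, mul_smul_comm, smul_smul,
      Real.mul_self_sqrt ht]
  refine ⟨K, fun i => Real.sqrt t • f i, c, hc, fun i => ?_, ?_⟩
  · rw [key i]
    exact le_trans (ncDeg_smul_le _ _) (hd i)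
  · rw [Finset.smul_sum]
    refine Finset.sum_congr rfl fun i _ => ?_
    rw [key i, sig_smul]

lemma MCd_sum {ι : Type*} {s : Finset ι} {F : ι → SPoly n}
    (h : ∀ i ∈ s, F i ∈ MCd C d) : (∑ i ∈ s, F i) ∈ MCd C d := by
  classical
  induction s using Finset.induction_on with
  | empty => simpa using MCd_zero
  | insert a s ha ih =>
    rw [Finset.sum_insert ha]
    exact MCd_add (h a (Finset.mem_insert_self a s))
      (ih fun i hi => h i (Finset.mem_insert_of_mem hi))

end MCdLemmas

/-! ### Singles indexed by lists -/

/-- `single` indexed by a list word. -/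
noncomputable def el {n : ℕ} (w : List (Fin n)) (ρ : SPoly n) : NCSPoly n :=
  MonoidAlgebra.single (FreeMonoid.ofList w) ρ

lemma el_mul {n : ℕ} (w w' : List (Fin n)) (ρ ρ' : SPoly n) :
    el w ρ * el w' ρ' = el (w ++ w') (ρ * ρ') := by
  rw [el, el, el, MonoidAlgebra.single_mul_single, FreeMonoid.ofList_append]

lemma ncStar_el {n : ℕ} (w : List (Fin n)) (ρ : SPoly n) :
    ncStar (el w ρ) = el w.reverse ρ := by
  rw [el, ncStar_single, el]
  rfl

lemma sig_el {n : ℕ} (w : List (Fin n)) (ρ : SPoly n) :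
    sig (el w ρ) = ρ * sigWordL w := by
  rw [el, sig_single, FreeMonoid.toList_ofList]

lemma ncDeg_el_le {n : ℕ} (w : List (Fin n)) (ρ : SPoly n) :
    ncDeg (el w ρ) ≤ sDeg ρ + w.length := by
  have h := ncDeg_single_le (FreeMonoid.ofList w) ρ
  rwa [FreeMonoid.toList_ofList] at h

lemma el_one {n : ℕ} : el ([] : List (Fin n)) 1 = 1 := by
  rw [el, MonoidAlgebra.one_def]
  rfl

lemma ncConst_eq_el {n : ℕ} (r : ℝ) : (ncConst r : NCSPoly n) = el [] (MvPolynomial.C r) := rfl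

lemma ncX_eq_el {n : ℕ} (j : Fin n) : (ncX j : NCSPoly n) = el [j] 1 := rfl

lemma ncX_sq {n : ℕ} (j : Fin n) : (ncX j : NCSPoly n) ^ 2 = el [j, j] 1 := by
  rw [sq, ncX_eq_el, el_mul, one_mul]
  rfl

/-! ### products of state symbols over lists of words -/

/-- Product of `ς`-symbols over a list of words. -/
noncomputable def prodL {n : ℕ} (L : List (List (Fin n))) : SPoly n :=
  (L.map sigWordL).prod

/-- Total weight of a list of words. -/
def wtL {n : ℕ} (L : List (List (Fin n))) : ℕ := (L.map List.length).sum

@[simp] lemma prodL_nil {n : ℕ} : prodL ([] : List (List (Fin n))) = 1 := rfl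

@[simp] lemma prodL_cons {n : ℕ} (u : List (Fin n)) (L : List (List (Fin n))) :
    prodL (u :: L) = sigWordL u * prodL L := by
  rw [prodL, List.map_cons, List.prod_cons, prodL]

@[simp] lemma wtL_nil {n : ℕ} : wtL ([] : List (List (Fin n))) = 0 := rfl

@[simp] lemma wtL_cons {n : ℕ} (u : List (Fin n)) (L : List (List (Fin n))) :
    wtL (u :: L) = u.length + wtL L := by
  rw [wtL, List.map_cons, List.sum_cons, wtL]

lemma prodL_append {n : ℕ} (L₁ L₂ : List (List (Fin n))) :
    prodL (L₁ ++ L₂) = prodL L₁ * prodL L₂ := by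
  rw [prodL, List.map_append, List.prod_append, prodL, prodL]

lemma wtL_append {n : ℕ} (L₁ L₂ : List (List (Fin n))) :
    wtL (L₁ ++ L₂) = wtL L₁ + wtL L₂ := by
  rw [wtL, List.map_append, List.sum_append, wtL, wtL]

lemma sDeg_prodL_le {n : ℕ} (L : List (List (Fin n))) : sDeg (prodL L) ≤ wtL L := by
  induction L with
  | nil => simp [sDeg_one]
  | cons u L ih =>
    rw [prodL_cons, wtL_cons]
    exact le_trans (sDeg_mul_le _ _) (add_le_add (sDeg_sigWordL_le u) ih)
lemma ncConst_mul {n : ℕ} (r : ℝ) (f : NCSPoly n) : ncConst r * f = r • f := by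
  refine MonoidAlgebra.ext (Finsupp.ext fun w => ?_)
  have h := MonoidAlgebra.coeff_single_one_mul f
    (MvPolynomial.C r) w
  rw [MonoidAlgebra.coeff_smul_apply, MvPolynomial.smul_eq_C_mul]
  exact h

section Arch

variable {n d : ℕ} {C : Set (NCSPoly n)} {N : ℝ} {m : ℕ} {t : Fin m → ℝ} {g : Fin m → NCSPoly n}

lemma SB_mem (hN : 0 < N) (ht : ∀ i, 0 ≤ t i)
    (hg : ∀ i, (g i ∈ C ∧ IsFreePoly (g i) ∧ ncDeg (g i) ≤ 2) ∨
      (∃ p : NCSPoly n, IsFreePoly p ∧ ncDeg p ≤ 1 ∧ g i = p * ncStar p))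
    (hid : ncConst N - ∑ j : Fin n, ncX j ^ 2 = ∑ i, ncConst (t i) * g i)
    (w : List (Fin n)) (ρ : SPoly n) (hd1 : sDeg ρ + w.length + 1 ≤ d) :
    N • (ρ ^ 2 * sigWordL (w ++ w.reverse))
      - ∑ j : Fin n, ρ ^ 2 * sigWordL (w ++ [j, j] ++ w.reverse) ∈ MCd C d := by
  classical
  set h : NCSPoly n := el w ρ with hh
  -- degree of h
  have hdh : ncDeg h ≤ sDeg ρ + w.length := ncDeg_el_le w ρ
  -- each middle term has ncDeg ≤ 2
  have hdg : ∀ i, ncDeg (g i) ≤ 2 := by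
    intro i
    rcases hg i with ⟨_, _, h2⟩ | ⟨p, _, hp, hgi⟩
    · exact h2
    · rw [hgi]
      exact le_trans (ncDeg_mul_le _ _)
        (le_trans (add_le_add hp (le_trans (ncDeg_ncStar_le p) hp)) (by norm_num))
  have hdeg : ∀ i, ncDeg (h * g i * ncStar h) ≤ 2 * d := by
    intro i
    have h1 : ncDeg (h * g i * ncStar h) ≤ (sDeg ρ + w.length) + 2 + (sDeg ρ + w.length) :=
      le_trans (ncDeg_mul_le _ _)
        (add_le_add (le_trans (ncDeg_mul_le _ _) (add_le_add hdh (hdg i)))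
          (le_trans (ncDeg_ncStar_le h) hdh))
    omega
  -- each summand is in the cone
  have hmem : ∀ i, t i • sig (h * g i * ncStar h) ∈ MCd C d := by
    intro i
    refine MCd_smul (ht i) ?_
    rcases hg i with ⟨hC, _, _⟩ | ⟨p, _, hp, hgi⟩
    · exact MCd_mem_single (Set.mem_insert_iff.mpr (Or.inr hC)) (hdeg i)
    · have hrw : (h * p) * (1 : NCSPoly n) * ncStar (h * p) = h * g i * ncStar h := by
        rw [mul_one, ncStar_mul, ← mul_assoc, mul_assoc h p (ncStar p), hgi]
      rw [← hrw]
      refine MCd_mem_single (Set.mem_insert _ _) ?_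
      rw [hrw]; exact hdeg i
  -- the nc identity, multiplied by h on both sides
  have key2 : h * (ncConst N - ∑ j : Fin n, ncX j ^ 2) * ncStar h
      = ∑ i, t i • (h * g i * ncStar h) := by
    rw [hid, Finset.mul_sum, Finset.sum_mul]
    refine Finset.sum_congr rfl fun i _ => ?_
    rw [ncConst_mul, mul_smul_comm, smul_mul_assoc]
  -- computing the left-hand side of key2
  have key1 : sig (h * (ncConst N - ∑ j : Fin n, ncX j ^ 2) * ncStar h)
      = N • (ρ ^ 2 * sigWordL (w ++ w.reverse))
        - ∑ j : Fin n, ρ ^ 2 * sigWordL (w ++ [j, j] ++ w.reverse) := by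
    have e1 : h * (ncConst N - ∑ j : Fin n, ncX j ^ 2) * ncStar h
        = el ((w ++ []) ++ w.reverse) ((ρ * MvPolynomial.C N) * ρ)
          - ∑ j : Fin n, el ((w ++ [j, j]) ++ w.reverse) ((ρ * 1) * ρ) := by
      rw [hh, mul_sub, sub_mul, Finset.mul_sum, Finset.sum_mul, ncStar_el]
      refine congrArg₂ HSub.hSub ?_ ?_
      · rw [ncConst_eq_el, el_mul, el_mul]
      · refine Finset.sum_congr rfl fun j _ => ?_
        rw [ncX_sq, el_mul, el_mul]
    rw [e1, sig_sub, sig_sum, sig_el]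
    refine congrArg₂ HSub.hSub ?_ ?_
    · rw [List.append_nil, MvPolynomial.smul_eq_C_mul]; ring
    · refine Finset.sum_congr rfl fun j _ => ?_
      rw [sig_el]; ring
  rw [← key1, key2, sig_sum]
  have : ∀ i, sig (t i • (h * g i * ncStar h)) = t i • sig (h * g i * ncStar h) :=
    fun i => sig_smul _ _
  rw [Finset.sum_congr rfl fun i _ => this i]
  exact MCd_sum fun i _ => hmem i

lemma lemA_strip (hN : 0 < N) (ht : ∀ i, 0 ≤ t i)
    (hg : ∀ i, (g i ∈ C ∧ IsFreePoly (g i) ∧ ncDeg (g i) ≤ 2) ∨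
      (∃ p : NCSPoly n, IsFreePoly p ∧ ncDeg p ≤ 1 ∧ g i = p * ncStar p))
    (hid : ncConst N - ∑ j : Fin n, ncX j ^ 2 = ∑ i, ncConst (t i) * g i)
    (M : List (List (Fin n)))
    (hbase : wtL M ≤ d → N ^ (wtL M) • (1 : SPoly n) - (prodL M) ^ 2 ∈ MCd C d) :
    ∀ v : List (Fin n), wtL M + v.length ≤ d →
      N ^ (wtL M + v.length) • (1 : SPoly n) - (prodL M) ^ 2 * sigWordL (v ++ v.reverse)
        ∈ MCd C d := by
  intro v
  induction v using List.reverseRecOn with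
  | nil =>
    intro hle
    simp only [List.length_nil, Nat.add_zero] at hle ⊢
    have h0 := hbase hle
    simpa [sigWordL_nil] using h0
  | append_singleton v' j ih =>
    intro hle
    have hlen : (v' ++ [j]).length = v'.length + 1 := by simp
    rw [hlen] at hle ⊢
    rw [show wtL M + (v'.length + 1) = (wtL M + v'.length) + 1 from by omega]
    set ρ : SPoly n := prodL M with hρ
    set m' : ℕ := wtL M + v'.length with hm'
    set A : SPoly n := ρ ^ 2 * sigWordL (v' ++ v'.reverse) with hA
    set B : Fin n → SPoly n := fun k => ρ ^ 2 * sigWordL ((v' ++ [k, k]) ++ v'.reverse) with hB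
    have hword : ∀ k : Fin n, (v' ++ [k]) ++ ((v' ++ [k]).reverse) = (v' ++ [k, k]) ++ v'.reverse := by
      intro k; simp
    have hX1 : N • (N ^ m' • (1 : SPoly n) - A) ∈ MCd C d :=
      MCd_smul hN.le (ih (by omega))
    have hρle : sDeg ρ ≤ wtL M := by rw [hρ]; exact sDeg_prodL_le M
    have hX2 : N • A - ∑ k : Fin n, B k ∈ MCd C d := by
      have hd1 : sDeg ρ + v'.length + 1 ≤ d := by omega
      have := SB_mem hN ht hg hid v' ρ hd1
      simpa [hA, hB] using this
    have hX3 : (∑ k ∈ Finset.univ.erase j, B k) ∈ MCd C d := by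
      refine MCd_sum fun k _ => ?_
      have hBk : B k = sig (el (v' ++ [k]) ρ * (1 : NCSPoly n) * ncStar (el (v' ++ [k]) ρ)) := by
        rw [mul_one, ncStar_el, el_mul, sig_el, hword k, hB]
        ring
      rw [hBk]
      refine MCd_mem_single (Set.mem_insert _ _) ?_
      have h1 : ncDeg (el (v' ++ [k]) ρ * (1 : NCSPoly n) * ncStar (el (v' ++ [k]) ρ))
          ≤ (sDeg ρ + (v'.length + 1)) + 0 + (sDeg ρ + (v'.length + 1)) := by
        refine le_trans (ncDeg_mul_le _ _) (add_le_add (le_trans (ncDeg_mul_le _ _) ?_) ?_)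
        · refine add_le_add ?_ (le_of_eq ncDeg_one)
          have := ncDeg_el_le (v' ++ [k]) ρ
          simpa using this
        · refine le_trans (ncDeg_ncStar_le _) ?_
          have := ncDeg_el_le (v' ++ [k]) ρ
          simpa using this
      omega
    have hsum : ∑ k : Fin n, B k = B j + ∑ k ∈ Finset.univ.erase j, B k :=
      (Finset.add_sum_erase _ _ (Finset.mem_univ j)).symm
    have hT : N ^ (m' + 1) • (1 : SPoly n)
        - ρ ^ 2 * sigWordL ((v' ++ [j]) ++ ((v' ++ [j]).reverse))
        = N • (N ^ m' • (1 : SPoly n) - A) + (N • A - ∑ k : Fin n, B k)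
          + ∑ k ∈ Finset.univ.erase j, B k := by
      rw [hword j, hsum, pow_succ, mul_comm (N ^ m') N, mul_smul]
      show N • (N ^ m' • (1:SPoly n)) - B j = _
      module
    rw [hT]
    exact MCd_add (MCd_add hX1 hX2) hX3

lemma lemA (hN : 0 < N) (ht : ∀ i, 0 ≤ t i)
    (hg : ∀ i, (g i ∈ C ∧ IsFreePoly (g i) ∧ ncDeg (g i) ≤ 2) ∨
      (∃ p : NCSPoly n, IsFreePoly p ∧ ncDeg p ≤ 1 ∧ g i = p * ncStar p))
    (hid : ncConst N - ∑ j : Fin n, ncX j ^ 2 = ∑ i, ncConst (t i) * g i) :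
    ∀ (M : List (List (Fin n))) (v : List (Fin n)), wtL M + v.length ≤ d →
      N ^ (wtL M + v.length) • (1 : SPoly n) - (prodL M) ^ 2 * sigWordL (v ++ v.reverse)
        ∈ MCd C d := by
  intro M
  induction M with
  | nil =>
    refine lemA_strip hN ht hg hid [] fun _ => ?_
    simp only [wtL_nil, prodL_nil, pow_zero, one_smul, one_pow, sub_self]
    exact MCd_zero
  | cons u M' ih =>
    refine lemA_strip hN ht hg hid (u :: M') fun hle => ?_
    set ρ' : SPoly n := prodL M' with hρ'
    have h1 : N ^ (wtL M' + u.length) • (1 : SPoly n)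
        - ρ' ^ 2 * sigWordL (u ++ u.reverse) ∈ MCd C d := ih u (by rw [wtL_cons] at hle; omega)
    have h2 : ρ' ^ 2 * sigWordL (u ++ u.reverse) - (prodL (u :: M')) ^ 2 ∈ MCd C d := by
      set q : SPoly n := ρ' * sigWordL u with hq
      set G : NCSPoly n := el u ρ' - el [] q with hG
      have hg2 : G * (1 : NCSPoly n) * ncStar G
          = (el (u ++ u.reverse) (ρ' * ρ') - el (u ++ []) (ρ' * q))
            - (el ([] ++ u.reverse) (q * ρ') - el ([] ++ []) (q * q)) := by
        rw [hG, mul_one, ncStar_sub, ncStar_el, ncStar_el, List.reverse_nil,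
          sub_mul, mul_sub, mul_sub, el_mul, el_mul, el_mul, el_mul]
      have hsig : sig (G * (1 : NCSPoly n) * ncStar G)
          = ρ' ^ 2 * sigWordL (u ++ u.reverse) - (prodL (u :: M')) ^ 2 := by
        rw [hg2, sig_sub, sig_sub, sig_sub, sig_el, sig_el, sig_el, sig_el,
          List.append_nil, List.nil_append, List.nil_append, sigWordL_nil,
          sigWordL_reverse, prodL_cons, hq]
        ring
      rw [← hsig]
      refine MCd_mem_single (Set.mem_insert _ _) ?_
      have hρ'le : sDeg ρ' ≤ wtL M' := by rw [hρ']; exact sDeg_prodL_le M'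
      have hdG : ncDeg G ≤ wtL M' + u.length := by
        refine le_trans (ncDeg_sub_le _ _) (max_le ?_ ?_)
        · exact le_trans (ncDeg_el_le _ _) (by omega)
        · refine le_trans (ncDeg_el_le _ _) ?_
          have h3 : sDeg q ≤ wtL M' + u.length := by
            rw [hq]
            refine le_trans (sDeg_mul_le _ _) ?_
            exact add_le_add hρ'le (sDeg_sigWordL_le u)
          simpa using h3
      have h4 : ncDeg (G * (1 : NCSPoly n) * ncStar G)
          ≤ (wtL M' + u.length) + 0 + (wtL M' + u.length) := by
        refine le_trans (ncDeg_mul_le _ _) (add_le_add (le_trans (ncDeg_mul_le _ _) ?_) ?_)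
        · exact add_le_add hdG (le_of_eq ncDeg_one)
        · exact le_trans (ncDeg_ncStar_le _) hdG
      refine le_trans h4 ?_
      rw [wtL_cons] at hle
      omega
    have hT : N ^ (wtL (u :: M')) • (1 : SPoly n) - (prodL (u :: M')) ^ 2
        = (N ^ (wtL M' + u.length) • (1 : SPoly n) - ρ' ^ 2 * sigWordL (u ++ u.reverse))
          + (ρ' ^ 2 * sigWordL (u ++ u.reverse) - (prodL (u :: M')) ^ 2) := by
      rw [wtL_cons, Nat.add_comm u.length (wtL M')]
      module
    rw [hT]
    exact MCd_add h1 h2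

end Arch
lemma splitLemma {n : ℕ} (d : ℕ) :
    ∀ (L : List (List (Fin n))) (b : ℕ), wtL L ≤ d + b →
      ∃ (L₁ L₂ : List (List (Fin n))) (pre suf : List (Fin n)),
        wtL L₁ + pre.length ≤ d ∧ wtL L₂ + suf.length ≤ b ∧
        prodL L = prodL L₁ * prodL L₂ * sigWordL (pre ++ suf) := by
  intro L
  induction L with
  | nil =>
    intro b _
    exact ⟨[], [], [], [], by simp, by simp, by simp [sigWordL_nil]⟩
  | cons w L' ih =>
    intro b hle
    rw [wtL_cons] at hle
    by_cases h1 : w.length + wtL L' ≤ d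
    · refine ⟨w :: L', [], [], [], ?_, by simp, by simp [sigWordL_nil]⟩
      rw [wtL_cons]; simpa using h1
    · by_cases h2 : wtL L' ≤ d
      · refine ⟨L', [], w.take (d - wtL L'), w.drop (d - wtL L'), ?_, ?_, ?_⟩
        · rw [List.length_take]; omega
        · rw [List.length_drop]; simp only [wtL_nil, Nat.zero_add]; omega
        · rw [List.take_append_drop, prodL_cons, prodL_nil, mul_one]; ring
      · obtain ⟨L₁, L₂, pre, suf, hA, hB, hEq⟩ := ih (b - w.length) (by omega)
        refine ⟨L₁, w :: L₂, pre, suf, hA, ?_, ?_⟩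
        · rw [wtL_cons]; omega
        · rw [prodL_cons, hEq, prodL_cons]; ring

section Arch2

variable {n d : ℕ} {C : Set (NCSPoly n)} {N : ℝ} {m : ℕ} {t : Fin m → ℝ} {g : Fin m → NCSPoly n}

lemma lemB (hN : 0 < N) (ht : ∀ i, 0 ≤ t i)
    (hg : ∀ i, (g i ∈ C ∧ IsFreePoly (g i) ∧ ncDeg (g i) ≤ 2) ∨
      (∃ p : NCSPoly n, IsFreePoly p ∧ ncDeg p ≤ 1 ∧ g i = p * ncStar p))
    (hid : ncConst N - ∑ j : Fin n, ncX j ^ 2 = ∑ i, ncConst (t i) * g i)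
    (L : List (List (Fin n))) (hL : wtL L ≤ 2 * d) :
    ∃ c : ℝ, 0 ≤ c ∧ c • (1 : SPoly n) + prodL L ∈ MCd C d ∧
      c • (1 : SPoly n) - prodL L ∈ MCd C d := by
  classical
  obtain ⟨L₁, L₂, pre, suf, h1, h2, hEq⟩ := splitLemma d L d (by omega)
  set ρ₁ : SPoly n := prodL L₁ with hρ₁
  set ρ₂ : SPoly n := prodL L₂ with hρ₂
  have hd₁ : sDeg ρ₁ ≤ wtL L₁ := by rw [hρ₁]; exact sDeg_prodL_le L₁
  have hd₂ : sDeg ρ₂ ≤ wtL L₂ := by rw [hρ₂]; exact sDeg_prodL_le L₂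
  set P₁ : SPoly n := ρ₁ ^ 2 * sigWordL (pre ++ pre.reverse) with hP₁def
  set P₂ : SPoly n := ρ₂ ^ 2 * sigWordL (suf.reverse ++ suf) with hP₂def
  have hP₁ : N ^ (wtL L₁ + pre.length) • (1 : SPoly n) - P₁ ∈ MCd C d :=
    lemA hN ht hg hid L₁ pre (by omega)
  have hP₂ : N ^ (wtL L₂ + suf.length) • (1 : SPoly n) - P₂ ∈ MCd C d := by
    have h := lemA (d := d) hN ht hg hid L₂ suf.reverse (by rw [List.length_reverse]; omega)
    rw [List.reverse_reverse, List.length_reverse] at h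
    exact h
  -- the two Cauchy-Schwarz elements
  have hrevword : sigWordL (suf.reverse ++ pre.reverse) = sigWordL (pre ++ suf) := by
    rw [← List.reverse_append, sigWordL_reverse]
  have hdeg : ∀ G : NCSPoly n, ncDeg G ≤ d → ncDeg (G * (1 : NCSPoly n) * ncStar G) ≤ 2 * d := by
    intro G hG
    have := le_trans (ncDeg_mul_le (G * 1) (ncStar G))
      (add_le_add (le_trans (ncDeg_mul_le G 1)
        (add_le_add hG (le_of_eq ncDeg_one))) (le_trans (ncDeg_ncStar_le G) hG))
    omega
  have hdeg₁ : ncDeg (el pre ρ₁ : NCSPoly n) ≤ d :=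
    le_trans (ncDeg_el_le _ _) (by omega)
  have hdeg₂ : ncDeg (el suf.reverse ρ₂ : NCSPoly n) ≤ d := by
    refine le_trans (ncDeg_el_le _ _) ?_
    rw [List.length_reverse]; omega
  -- plus version
  have hplus : P₁ + P₂ + (2 : ℝ) • prodL L ∈ MCd C d := by
    set G : NCSPoly n := el pre ρ₁ + el suf.reverse ρ₂ with hG
    have hmul : G * (1 : NCSPoly n) * ncStar G
        = (el (pre ++ pre.reverse) (ρ₁ * ρ₁) + el (pre ++ suf) (ρ₁ * ρ₂))
          + (el (suf.reverse ++ pre.reverse) (ρ₂ * ρ₁)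
            + el (suf.reverse ++ suf) (ρ₂ * ρ₂)) := by
      rw [hG, mul_one, ncStar_add, ncStar_el, ncStar_el, List.reverse_reverse,
        add_mul, mul_add, mul_add, el_mul, el_mul, el_mul, el_mul]
    have hsig : sig (G * (1 : NCSPoly n) * ncStar G) = P₁ + P₂ + (2 : ℝ) • prodL L := by
      rw [hmul, sig_add, sig_add, sig_add, sig_el, sig_el, sig_el, sig_el, hrevword,
        hEq, hP₁def, hP₂def, two_smul]
      ring
    rw [← hsig]
    refine MCd_mem_single (Set.mem_insert _ _) (hdeg G ?_)
    exact le_trans (ncDeg_add_le _ _) (max_le hdeg₁ hdeg₂)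
  -- minus version
  have hminus : P₁ + P₂ - (2 : ℝ) • prodL L ∈ MCd C d := by
    set G : NCSPoly n := el pre ρ₁ - el suf.reverse ρ₂ with hG
    have hmul : G * (1 : NCSPoly n) * ncStar G
        = (el (pre ++ pre.reverse) (ρ₁ * ρ₁) - el (pre ++ suf) (ρ₁ * ρ₂))
          - (el (suf.reverse ++ pre.reverse) (ρ₂ * ρ₁)
            - el (suf.reverse ++ suf) (ρ₂ * ρ₂)) := by
      rw [hG, mul_one, ncStar_sub, ncStar_el, ncStar_el, List.reverse_reverse,
        sub_mul, mul_sub, mul_sub, el_mul, el_mul, el_mul, el_mul]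
    have hsig : sig (G * (1 : NCSPoly n) * ncStar G) = P₁ + P₂ - (2 : ℝ) • prodL L := by
      rw [hmul, sig_sub, sig_sub, sig_sub, sig_el, sig_el, sig_el, sig_el, hrevword,
        hEq, hP₁def, hP₂def, two_smul]
      ring
    rw [← hsig]
    refine MCd_mem_single (Set.mem_insert _ _) (hdeg G ?_)
    exact le_trans (ncDeg_sub_le _ _) (max_le hdeg₁ hdeg₂)
  -- combine
  set c' : ℝ := N ^ (wtL L₁ + pre.length) + N ^ (wtL L₂ + suf.length) with hc'
  refine ⟨c' / 2, by positivity, ?_, ?_⟩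
  · have hmem : c' • (1 : SPoly n) + (2 : ℝ) • prodL L ∈ MCd C d := by
      have hEq2 : c' • (1 : SPoly n) + (2 : ℝ) • prodL L
          = (N ^ (wtL L₁ + pre.length) • (1 : SPoly n) - P₁)
            + (N ^ (wtL L₂ + suf.length) • (1 : SPoly n) - P₂)
            + (P₁ + P₂ + (2 : ℝ) • prodL L) := by
        rw [hc', add_smul]; module
      rw [hEq2]
      exact MCd_add (MCd_add hP₁ hP₂) hplus
    have := MCd_smul (t := (1 : ℝ) / 2) (by norm_num) hmem
    have hEq3 : ((1 : ℝ) / 2) • (c' • (1 : SPoly n) + (2 : ℝ) • prodL L)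
        = (c' / 2) • (1 : SPoly n) + prodL L := by
      rw [div_eq_mul_inv, div_eq_mul_inv, mul_comm c']
      module
    rwa [hEq3] at this
  · have hmem : c' • (1 : SPoly n) - (2 : ℝ) • prodL L ∈ MCd C d := by
      have hEq2 : c' • (1 : SPoly n) - (2 : ℝ) • prodL L
          = (N ^ (wtL L₁ + pre.length) • (1 : SPoly n) - P₁)
            + (N ^ (wtL L₂ + suf.length) • (1 : SPoly n) - P₂)
            + (P₁ + P₂ - (2 : ℝ) • prodL L) := by
        rw [hc', add_smul]; module
      rw [hEq2]
      exact MCd_add (MCd_add hP₁ hP₂) hminus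
    have := MCd_smul (t := (1 : ℝ) / 2) (by norm_num) hmem
    have hEq3 : ((1 : ℝ) / 2) • (c' • (1 : SPoly n) - (2 : ℝ) • prodL L)
        = (c' / 2) • (1 : SPoly n) - prodL L := by
      rw [div_eq_mul_inv, div_eq_mul_inv, mul_comm c']
      module
    rwa [hEq3] at this

lemma monomial_eq_prodL {n : ℕ} (mm : SW n →₀ ℕ) :
    ∃ L : List (List (Fin n)), wtL L = monoWeight mm ∧
      prodL L = MvPolynomial.monomial mm 1 := by
  classical
  have hout : ∀ q : SW n, sigWordL (Quotient.out q).1 = MvPolynomial.X q := by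
    intro q
    rw [sigWordL, dif_neg (Quotient.out q).2]
    exact congrArg MvPolynomial.X (Quotient.out_eq q)
  have hlen : ∀ q : SW n, (Quotient.out q).1.length = swDeg q := by
    intro q
    conv_rhs => rw [← Quotient.out_eq q]
    exact (swDeg_mk _).symm
  have key : ∀ ls : List (SW n),
      ∃ L : List (List (Fin n)), wtL L = (ls.map fun q => mm q * swDeg q).sum ∧
        prodL L = (ls.map fun q => MvPolynomial.X q ^ mm q).prod := by
    intro ls
    induction ls with
    | nil => exact ⟨[], rfl, rfl⟩
    | cons q ls ih =>
      obtain ⟨L, hw, hp⟩ := ih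
      refine ⟨List.replicate (mm q) (Quotient.out q).1 ++ L, ?_, ?_⟩
      · rw [wtL_append, hw, List.map_cons, List.sum_cons]
        congr 1
        rw [wtL, List.map_replicate, List.sum_replicate, smul_eq_mul, hlen q]
      · rw [prodL_append, hp, List.map_cons, List.prod_cons]
        congr 1
        rw [prodL, List.map_replicate, List.prod_replicate, hout q]
  obtain ⟨L, hw, hp⟩ := key mm.support.toList
  refine ⟨L, ?_, ?_⟩
  · rw [hw, Finset.sum_map_toList]
    rfl
  · rw [hp, Finset.prod_map_toList]
    rw [MvPolynomial.monomial_eq, MvPolynomial.C_1, one_mul]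
    rfl

lemma lemC (hN : 0 < N) (ht : ∀ i, 0 ≤ t i)
    (hg : ∀ i, (g i ∈ C ∧ IsFreePoly (g i) ∧ ncDeg (g i) ≤ 2) ∨
      (∃ p : NCSPoly n, IsFreePoly p ∧ ncDeg p ≤ 1 ∧ g i = p * ncStar p))
    (hid : ncConst N - ∑ j : Fin n, ncX j ^ 2 = ∑ i, ncConst (t i) * g i)
    {p : SPoly n} (hp : sDeg p ≤ 2 * d) :
    ∃ c : ℝ, 0 ≤ c ∧ c • (1 : SPoly n) + p ∈ MCd C d ∧
      c • (1 : SPoly n) - p ∈ MCd C d := by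
  classical
  have aux : ∀ s : Finset (SW n →₀ ℕ), (∀ mm ∈ s, monoWeight mm ≤ 2 * d) →
      ∀ φ : (SW n →₀ ℕ) → ℝ, ∃ c : ℝ, 0 ≤ c ∧
        c • (1 : SPoly n) + ∑ mm ∈ s, MvPolynomial.monomial mm (φ mm) ∈ MCd C d ∧
        c • (1 : SPoly n) - ∑ mm ∈ s, MvPolynomial.monomial mm (φ mm) ∈ MCd C d := by
    intro s
    induction s using Finset.induction_on with
    | empty =>
      intro _ φ
      exact ⟨0, le_rfl, by simpa using MCd_zero, by simpa using MCd_zero⟩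
    | insert a s ha ih =>
      intro hs φ
      obtain ⟨c₂, hc₂, h₂p, h₂m⟩ := ih (fun mm hm => hs mm (Finset.mem_insert_of_mem hm)) φ
      obtain ⟨L, hwL, hpL⟩ := monomial_eq_prodL a
      obtain ⟨c₁, hc₁, h₁p, h₁m⟩ := lemB hN ht hg hid L
        (by rw [hwL]; exact hs a (Finset.mem_insert_self a s))
      rw [hpL] at h₁p h₁m
      have hmono : MvPolynomial.monomial a (φ a) = φ a • MvPolynomial.monomial a 1 := by
        rw [MvPolynomial.smul_monomial, smul_eq_mul, mul_one]
      have hterm_p : (|φ a| * c₁) • (1 : SPoly n) + φ a • MvPolynomial.monomial a 1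
          ∈ MCd C d := by
        rcases abs_cases (φ a) with ⟨hab, hnn⟩ | ⟨hab, hneg⟩
        · rw [hab]
          have hE : (φ a * c₁) • (1 : SPoly n) + φ a • MvPolynomial.monomial a 1
              = φ a • (c₁ • (1 : SPoly n) + MvPolynomial.monomial a 1) := by
            rw [mul_smul]; module
          rw [hE]; exact MCd_smul hnn h₁p
        · rw [hab]
          have hE : (-φ a * c₁) • (1 : SPoly n) + φ a • MvPolynomial.monomial a 1
              = (-φ a) • (c₁ • (1 : SPoly n) - MvPolynomial.monomial a 1) := by
            rw [mul_smul]; module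
          rw [hE]; exact MCd_smul (by linarith) h₁m
      have hterm_m : (|φ a| * c₁) • (1 : SPoly n) - φ a • MvPolynomial.monomial a 1
          ∈ MCd C d := by
        rcases abs_cases (φ a) with ⟨hab, hnn⟩ | ⟨hab, hneg⟩
        · rw [hab]
          have hE : (φ a * c₁) • (1 : SPoly n) - φ a • MvPolynomial.monomial a 1
              = φ a • (c₁ • (1 : SPoly n) - MvPolynomial.monomial a 1) := by
            rw [mul_smul]; module
          rw [hE]; exact MCd_smul hnn h₁m
        · rw [hab]
          have hE : (-φ a * c₁) • (1 : SPoly n) - φ a • MvPolynomial.monomial a 1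
              = (-φ a) • (c₁ • (1 : SPoly n) + MvPolynomial.monomial a 1) := by
            rw [mul_smul]; module
          rw [hE]; exact MCd_smul (by linarith) h₁p
      refine ⟨|φ a| * c₁ + c₂, by positivity, ?_, ?_⟩
      · rw [Finset.sum_insert ha, hmono]
        have key : (|φ a| * c₁ + c₂) • (1 : SPoly n)
            + (φ a • MvPolynomial.monomial a 1 + ∑ mm ∈ s, MvPolynomial.monomial mm (φ mm))
            = ((|φ a| * c₁) • (1 : SPoly n) + φ a • MvPolynomial.monomial a 1)
              + (c₂ • (1 : SPoly n) + ∑ mm ∈ s, MvPolynomial.monomial mm (φ mm)) := by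
          rw [add_smul]; module
        rw [key]
        exact MCd_add hterm_p h₂p
      · rw [Finset.sum_insert ha, hmono]
        have key : (|φ a| * c₁ + c₂) • (1 : SPoly n)
            - (φ a • MvPolynomial.monomial a 1 + ∑ mm ∈ s, MvPolynomial.monomial mm (φ mm))
            = ((|φ a| * c₁) • (1 : SPoly n) - φ a • MvPolynomial.monomial a 1)
              + (c₂ • (1 : SPoly n) - ∑ mm ∈ s, MvPolynomial.monomial mm (φ mm)) := by
          rw [add_smul]; module
        rw [key]
        exact MCd_add hterm_m h₂m
  have h := aux p.support (fun mm hm => le_trans (Finset.le_sup (f := monoWeight) hm) hp)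
    (fun mm => MvPolynomial.coeff mm p)
  rwa [← MvPolynomial.as_sum p] at h

end Arch2
lemma swDeg_pos {n : ℕ} (q : SW n) : 1 ≤ swDeg q := by
  induction q using Quotient.ind with
  | _ u =>
    rw [swDeg_mk]
    exact List.length_pos_iff.mpr u.2

lemma single_le_monoWeight {n : ℕ} (mm : SW n →₀ ℕ) (q : SW n) :
    mm q * swDeg q ≤ monoWeight mm := by
  classical
  by_cases h : mm q = 0
  · simp [h]
  · have hq : q ∈ mm.support := Finsupp.mem_support_iff.mpr h
    rw [monoWeight, Finsupp.sum]
    exact Finset.single_le_sum (f := fun q => mm q * swDeg q) (fun i _ => Nat.zero_le _) hq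

lemma outlen_eq_swDeg {n : ℕ} (q : SW n) : (Quotient.out q).1.length = swDeg q := by
  conv_rhs => rw [← Quotient.out_eq q]
  exact (swDeg_mk _).symm

lemma finite_Mset {n : ℕ} (D : ℕ) : {mm : SW n →₀ ℕ | monoWeight mm ≤ D}.Finite := by
  classical
  have hQ : {q : SW n | swDeg q ≤ D}.Finite := by
    have hlists : {l : List (Fin n) | l.length ≤ D}.Finite := List.finite_length_le (Fin n) D
    have hsub : {q : SW n | swDeg q ≤ D} ⊆
        (fun l : {l : List (Fin n) // l ≠ []} => Quotient.mk (wordSetoid n) l) ''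
          {u | u.1.length ≤ D} := by
      intro q hq
      refine ⟨Quotient.out q, ?_, Quotient.out_eq q⟩
      show (Quotient.out q).1.length ≤ D
      rw [outlen_eq_swDeg]
      exact hq
    have hu : {u : {l : List (Fin n) // l ≠ []} | u.1.length ≤ D}.Finite := by
      have hpre : {u : {l : List (Fin n) // l ≠ []} | u.1.length ≤ D}
          ⊆ Subtype.val ⁻¹' {l : List (Fin n) | l.length ≤ D} := fun u hu => hu
      exact (Set.Finite.preimage (Subtype.val_injective.injOn) hlists).subset hpre
    exact (hu.image _).subset hsub
  haveI : Finite {q : SW n | swDeg q ≤ D} := hQ.to_subtype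
  set Φ : {mm : SW n →₀ ℕ | monoWeight mm ≤ D} → ({q : SW n | swDeg q ≤ D} → Fin (D + 1)) :=
    fun mp q => ⟨mp.1 q.1, by
      have h1 := single_le_monoWeight mp.1 q.1
      have h2 := swDeg_pos q.1
      have h3 := mp.2
      simp only [Set.mem_setOf_eq] at h3
      have h4 : mp.1 q.1 ≤ mp.1 q.1 * swDeg q.1 := Nat.le_mul_of_pos_right _ h2
      omega⟩ with hΦdef
  have hΦ : Function.Injective Φ := by
    rintro ⟨m₁, h₁⟩ ⟨m₂, h₂⟩ h
    have hz : ∀ (mz : SW n →₀ ℕ), monoWeight mz ≤ D → ∀ q : SW n, ¬ swDeg q ≤ D → mz q = 0 := by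
      intro mz hmz q hq
      by_contra hne
      have h1 := single_le_monoWeight mz q
      have h2 : swDeg q ≤ mz q * swDeg q := Nat.le_mul_of_pos_left _ (Nat.pos_of_ne_zero hne)
      omega
    refine Subtype.ext (Finsupp.ext fun q => ?_)
    by_cases hq : swDeg q ≤ D
    · have := congrFun h ⟨q, hq⟩
      simpa [hΦdef, Fin.ext_iff] using this
    · rw [hz m₁ h₁ q hq, hz m₂ h₂ q hq]
  haveI : Finite {mm : SW n →₀ ℕ | monoWeight mm ≤ D} := Finite.of_injective Φ hΦ
  exact Set.toFinite _

lemma finiteDimensional_SPolyLe (n D : ℕ) : FiniteDimensional ℝ (SPolyLe n D) := by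
  classical
  have hM := finite_Mset (n := n) D
  set B : Set (SPoly n) := (fun mm => (MvPolynomial.monomial mm (1 : ℝ)))
    '' {mm | monoWeight mm ≤ D} with hBdef
  have hB : B.Finite := hM.image _
  have hle : SPolyLe n D ≤ Submodule.span ℝ B := by
    intro p hp
    have hsd : sDeg p ≤ D := hp
    rw [MvPolynomial.as_sum p]
    refine Submodule.sum_mem _ fun mm hm => ?_
    have h1 : MvPolynomial.monomial mm (MvPolynomial.coeff mm p)
        = MvPolynomial.coeff mm p • MvPolynomial.monomial mm 1 := by
      rw [MvPolynomial.smul_monomial, smul_eq_mul, mul_one]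
    rw [h1]
    refine Submodule.smul_mem _ _ (Submodule.subset_span ?_)
    exact ⟨mm, le_trans (Finset.le_sup (f := monoWeight) hm) hsd, rfl⟩
  haveI := FiniteDimensional.span_of_finite ℝ hB
  exact Submodule.finiteDimensional_of_le hle
set_option maxHeartbeats 2000000
set_option synthInstance.maxHeartbeats 1000000

/-- Proposition `p:nogap`, strong duality.
Let `C ⊆ 𝐒` be balanced with the strengthened boundedness hypothesis, let `a ∈ 𝒮_{2d}`,
and suppose `a_{min,d} = sup{m : a − m ∈ M(C)_d}` is finite (the set is nonempty and
bounded above).  Then there is `L ∈ (M(C)_d)^∨` with `L(1) = 1` and `L(a) = a_{min,d}`,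
and moreover `a_{min,d} ≤ L'(a)` for every `L' ∈ (M(C)_d)^∨` with `L'(1) = 1`; that is,
`inf{L(a) : L ∈ (M(C)_d)^∨, L(1) = 1} = a_{min,d}` and the infimum is attained. -/
theorem statement_15 (n d : ℕ) (hn : 1 ≤ n) (C : Set (NCSPoly n))
    (hbal : Balanced C) (hsb : StrongBounded C)
    (a : SPoly n) (ha : sDeg a ≤ 2 * d)
    (hne : {m : ℝ | a - MvPolynomial.C m ∈ MCd C d}.Nonempty)
    (hbdd : BddAbove {m : ℝ | a - MvPolynomial.C m ∈ MCd C d}) :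
    ∃ L : SPolyLe n (2 * d) →ₗ[ℝ] ℝ, InDualCone d C L ∧ lext L 1 = 1 ∧
      lext L a = sSup {m : ℝ | a - MvPolynomial.C m ∈ MCd C d} ∧
      ∀ L' : SPolyLe n (2 * d) →ₗ[ℝ] ℝ, InDualCone d C L' → lext L' 1 = 1 →
        sSup {m : ℝ | a - MvPolynomial.C m ∈ MCd C d} ≤ lext L' a := by
  classical
  obtain ⟨N, hN, mK, t, g, ht, hg, hid⟩ := hsb
  haveI : FiniteDimensional ℝ (SPolyLe n (2 * d)) := finiteDimensional_SPolyLe n (2 * d)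
  set S : Set ℝ := {m : ℝ | a - MvPolynomial.C m ∈ MCd C d} with hSdef
  set astar : ℝ := sSup S with hastar
  have hC1 : ∀ r : ℝ, (MvPolynomial.C r : SPoly n) = r • (1 : SPoly n) := fun r => by
    rw [MvPolynomial.smul_eq_C_mul, mul_one]
  have h1le : sDeg (1 : SPoly n) ≤ 2 * d := one_mem_SPolyLe (2 * d)
  set oneV : SPolyLe n (2 * d) := ⟨1, h1le⟩ with honeV
  set aV : SPolyLe n (2 * d) := ⟨a, ha⟩ with haVdef
  -- The easy direction (weak duality).
  have goalA : ∀ L' : SPolyLe n (2 * d) →ₗ[ℝ] ℝ, InDualCone d C L' → lext L' 1 = 1 →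
      astar ≤ lext L' a := by
    intro L' hdual hone
    refine csSup_le hne fun mv hmv => ?_
    obtain ⟨K₀, fs, cs, hcs, hdegs, heq⟩ := hmv
    have hterm : ∀ i, sDeg (sig (fs i * cs i * ncStar (fs i))) ≤ 2 * d := fun i =>
      le_trans (sDeg_sig_le _) (hdegs i)
    set sV : SPolyLe n (2 * d) := ∑ i, (⟨sig (fs i * cs i * ncStar (fs i)), hterm i⟩ :
      SPolyLe n (2 * d)) with hsV
    have hcoe : (sV : SPoly n) = a - MvPolynomial.C mv := by
      rw [hsV, AddSubmonoidClass.coe_finset_sum]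
      exact heq.symm
    have haV2 : aV = sV + mv • oneV := by
      refine Subtype.ext ?_
      rw [Submodule.coe_add, Submodule.coe_smul, hcoe, honeV, haVdef]
      show a = (a - MvPolynomial.C mv) + mv • (1 : SPoly n)
      rw [← hC1]
      ring
    have h1 : lext L' a = L' aV := by rw [lext, dif_pos ha]
    have h2 : L' oneV = 1 := by
      rw [← hone, lext, dif_pos h1le]
    have h3 : 0 ≤ L' sV := by
      rw [hsV, map_sum]
      refine Finset.sum_nonneg fun i _ => ?_
      have h := hdual (fs i) (cs i) (hcs i) (hdegs i)
      rwa [lext, dif_pos (hterm i)] at h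
    rw [h1, haV2, map_add, map_smul, h2, smul_eq_mul, mul_one]
    linarith
  -- 1 ∈ MCd
  have hone_mem : (1 : SPoly n) ∈ MCd C d := by
    have hstar1 : ncStar (1 : NCSPoly n) = 1 := by
      rw [MonoidAlgebra.one_def, ncStar_single]; rfl
    have h0 : ((1 : NCSPoly n) * 1 * ncStar 1) = 1 := by rw [mul_one, hstar1, mul_one]
    have h1 := MCd_mem_single (C := C) (d := d) (f := 1) (c := 1) (Set.mem_insert _ _)
      (by rw [h0, ncDeg_one]; exact Nat.zero_le _)
    rw [h0] at h1
    have h2 : sig (1 : NCSPoly n) = 1 := by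
      rw [MonoidAlgebra.one_def, sig_single, FreeMonoid.toList_one, sigWordL_nil, mul_one]
    rwa [h2] at h1
  -- Euclidean model
  set k : ℕ := Module.finrank ℝ (SPolyLe n (2 * d)) with hk
  set e : SPolyLe n (2 * d) ≃ₗ[ℝ] (Fin k → ℝ) :=
    (Module.finBasis ℝ (SPolyLe n (2 * d))).equivFun with hedef
  set KV : Set (SPolyLe n (2 * d)) := {x | (x : SPoly n) ∈ MCd C d} with hKVdef
  set KE : Set (Fin k → ℝ) := (⇑e) '' KV with hKEdef
  set oneE : Fin k → ℝ := e oneV with honeE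
  have hKE_mem : ∀ x : SPolyLe n (2 * d), (x : SPoly n) ∈ MCd C d → e x ∈ KE := fun x hx =>
    ⟨x, hx, rfl⟩
  have hKE_zero : (0 : Fin k → ℝ) ∈ KE := by
    refine ⟨0, ?_, map_zero e⟩
    show ((0 : SPolyLe n (2 * d)) : SPoly n) ∈ MCd C d
    rw [Submodule.coe_zero]
    exact MCd_zero
  have hKE_add : ∀ x ∈ KE, ∀ y ∈ KE, x + y ∈ KE := by
    rintro x ⟨p, hp, rfl⟩ y ⟨q, hq, rfl⟩
    refine ⟨p + q, ?_, map_add e p q⟩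
    show ((p + q : SPolyLe n (2 * d)) : SPoly n) ∈ MCd C d
    rw [Submodule.coe_add]
    exact MCd_add hp hq
  have hKE_smul : ∀ r : ℝ, 0 ≤ r → ∀ x ∈ KE, r • x ∈ KE := by
    rintro r hr x ⟨p, hp, rfl⟩
    refine ⟨r • p, ?_, map_smul e r p⟩
    show ((r • p : SPolyLe n (2 * d)) : SPoly n) ∈ MCd C d
    rw [Submodule.coe_smul]
    exact MCd_smul hr hp
  have hKE_cvx : Convex ℝ KE := by
    intro x hx y hy α β hα hβ hαβ
    exact hKE_add _ (hKE_smul α hα x hx) _ (hKE_smul β hβ y hy)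
  have hone_KE : oneE ∈ KE := hKE_mem oneV hone_mem
  -- archimedean property in E
  have arch : ∀ y : Fin k → ℝ, ∃ c : ℝ, 0 ≤ c ∧ c • oneE + y ∈ KE ∧ c • oneE - y ∈ KE := by
    intro y
    obtain ⟨c, hc0, hcp, hcm⟩ := lemC hN ht hg hid (p := ((e.symm y : SPolyLe n (2 * d)) : SPoly n))
      (e.symm y).2
    refine ⟨c, hc0, ?_, ?_⟩
    · have : e (c • oneV + e.symm y) = c • oneE + y := by
        rw [map_add, map_smul, e.apply_symm_apply, honeE]
      rw [← this]
      refine hKE_mem _ ?_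
      rw [Submodule.coe_add, Submodule.coe_smul]
      exact hcp
    · have : e (c • oneV - e.symm y) = c • oneE - y := by
        rw [map_sub, map_smul, e.apply_symm_apply, honeE]
      rw [← this]
      refine hKE_mem _ ?_
      rw [Submodule.coe_sub, Submodule.coe_smul]
      exact hcm
  choose cf hcf0 hcfp hcfm using arch
  set δ : Fin k → (Fin k → ℝ) := fun i j => if i = j then (1 : ℝ) else 0 with hδdef
  set σ : ℝ := ∑ i, cf (δ i) with hσdef
  have hσ0 : 0 ≤ σ := Finset.sum_nonneg fun i _ => hcf0 _
  have claim0 : ∀ (y : Fin k → ℝ) (s : Finset (Fin k)),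
      (∑ i ∈ s, cf (δ i) * |y i|) • oneE + ∑ i ∈ s, y i • δ i ∈ KE := by
    intro y s
    induction s using Finset.induction_on with
    | empty => simpa using hKE_zero
    | insert i0 s hins ih =>
      rw [Finset.sum_insert hins, Finset.sum_insert hins]
      have hsplit : (cf (δ i0) * |y i0| + ∑ i ∈ s, cf (δ i) * |y i|) • oneE
          + (y i0 • δ i0 + ∑ i ∈ s, y i • δ i)
          = ((cf (δ i0) * |y i0|) • oneE + y i0 • δ i0)
            + ((∑ i ∈ s, cf (δ i) * |y i|) • oneE + ∑ i ∈ s, y i • δ i) := by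
        rw [add_smul]; module
      rw [hsplit]
      refine hKE_add _ ?_ _ ih
      rcases abs_cases (y i0) with ⟨hab, hnn⟩ | ⟨hab, hneg⟩
      · rw [hab]
        have hE : (cf (δ i0) * y i0) • oneE + y i0 • δ i0
            = y i0 • (cf (δ i0) • oneE + δ i0) := by
          rw [mul_comm, mul_smul]; module
        rw [hE]
        exact hKE_smul _ hnn _ (hcfp _)
      · rw [hab]
        have hE : (cf (δ i0) * -(y i0)) • oneE + y i0 • δ i0
            = (-(y i0)) • (cf (δ i0) • oneE - δ i0) := by
          rw [mul_comm, mul_smul]; module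
        rw [hE]
        exact hKE_smul _ (by linarith) _ (hcfm _)
  set r : ℝ := 1 / (σ + 1) with hrdef
  have hr : 0 < r := by rw [hrdef]; positivity
  have hball : Metric.ball oneE r ⊆ KE := by
    intro z hz
    set y : Fin k → ℝ := z - oneE with hy
    have hynorm : ‖y‖ < r := by
      rw [hy]
      have := Metric.mem_ball.mp hz
      rwa [dist_eq_norm] at this
    set σy : ℝ := ∑ i, cf (δ i) * |y i| with hσy
    have hσy0 : 0 ≤ σy := Finset.sum_nonneg fun i _ =>
      mul_nonneg (hcf0 _) (abs_nonneg _)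
    have hσyle : σy ≤ σ * ‖y‖ := by
      rw [hσy, hσdef, Finset.sum_mul]
      refine Finset.sum_le_sum fun i _ => ?_
      refine mul_le_mul_of_nonneg_left ?_ (hcf0 _)
      have := norm_le_pi_norm y i
      rwa [Real.norm_eq_abs] at this
    have hσylt : σy < 1 := by
      have h1 : σ * ‖y‖ ≤ σ * r := mul_le_mul_of_nonneg_left hynorm.le hσ0
      have h2 : σ * r < 1 := by
        rw [hrdef]
        rw [mul_one_div, div_lt_one (by positivity)]
        linarith
      linarith
    have hyrep : ∑ i, y i • δ i = y := by
      rw [hδdef]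
      exact (pi_eq_sum_univ y).symm
    have hmem := claim0 y Finset.univ
    rw [hyrep] at hmem
    have hz2 : z = (1 - σy) • oneE + (σy • oneE + y) := by
      rw [hy]; module
    rw [hz2]
    exact hKE_add _ (hKE_smul _ (by linarith) _ hone_KE) _ hmem
  have hint_one : oneE ∈ interior KE :=
    interior_maximal hball Metric.isOpen_ball (Metric.mem_ball_self hr)
  -- the boundary point
  set b0V : SPolyLe n (2 * d) := aV - astar • oneV with hb0V
  set b0E : Fin k → ℝ := e b0V with hb0E
  have hb0 : b0E ∉ interior KE := by
    intro hb0
    obtain ⟨δ₀, hδ₀pos, hδball⟩ := Metric.mem_nhds_iff.mp (mem_interior_iff_mem_nhds.mp hb0)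
    set ε : ℝ := δ₀ / (2 * (‖oneE‖ + 1)) with hεdef
    have hε : 0 < ε := by rw [hεdef]; positivity
    have hzball : b0E - ε • oneE ∈ Metric.ball b0E δ₀ := by
      rw [Metric.mem_ball, dist_eq_norm]
      have : b0E - ε • oneE - b0E = -(ε • oneE) := by module
      rw [this, norm_neg, norm_smul, Real.norm_eq_abs, abs_of_pos hε, hεdef]
      have h1 : ‖oneE‖ < 2 * (‖oneE‖ + 1) := by
        have := norm_nonneg oneE
        linarith
      rw [div_mul_eq_mul_div, div_lt_iff₀ (by positivity)]
      have h2 : 0 ≤ ‖oneE‖ := norm_nonneg _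
      nlinarith
    have hzKE : b0E - ε • oneE ∈ KE := hδball hzball
    obtain ⟨p, hp, hep⟩ := hzKE
    have hpeq : p = b0V - ε • oneV := by
      apply e.injective
      rw [hep, map_sub, map_smul, hb0E, honeE]
    rw [hpeq] at hp
    have hcoe2 : ((b0V - ε • oneV : SPolyLe n (2 * d)) : SPoly n)
        = a - MvPolynomial.C (astar + ε) := by
      rw [Submodule.coe_sub, Submodule.coe_smul, hb0V, Submodule.coe_sub, Submodule.coe_smul,
        haVdef, honeV]
      show a - astar • (1 : SPoly n) - ε • (1 : SPoly n) = a - MvPolynomial.C (astar + ε)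
      rw [hC1]
      module
    have hp' : ((b0V - ε • oneV : SPolyLe n (2 * d)) : SPoly n) ∈ MCd C d := hp
    rw [hcoe2] at hp'
    have hmemS : astar + ε ∈ S := hp'
    have := le_csSup hbdd hmemS
    rw [← hastar] at this
    linarith
  -- separation
  obtain ⟨f, hf⟩ := geometric_hahn_banach_open_point (hKE_cvx.interior) isOpen_interior hb0
  set gf : (Fin k → ℝ) →L[ℝ] ℝ := -f with hgfdef
  have hg' : ∀ z ∈ interior KE, gf b0E < gf z := by
    intro z hz
    have := hf z hz
    rw [hgfdef]
    simpa using neg_lt_neg this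
  have h_ge : ∀ y ∈ KE, gf b0E ≤ gf y := by
    intro y hy
    by_contra hlt
    push_neg at hlt
    have hval : ∀ τ : ℝ, gf (y + τ • (oneE - y)) = gf y + τ * (gf oneE - gf y) := by
      intro τ
      rw [map_add, map_smul, map_sub, smul_eq_mul]
    have hseg : ∀ τ : ℝ, τ ∈ Set.Ioc (0 : ℝ) 1 →
        gf b0E < gf y + τ * (gf oneE - gf y) := by
      intro τ hτ
      have := hg' _ (hKE_cvx.add_smul_sub_mem_interior hy hint_one hτ)
      rwa [hval] at this
    set A : ℝ := gf b0E - gf y with hA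
    set B : ℝ := gf oneE - gf y with hB
    have hA0 : 0 < A := by rw [hA]; linarith
    have hAB : A < B := by
      have := hseg 1 ⟨one_pos, le_rfl⟩
      rw [hA, hB]; linarith
    have hB0 : 0 < B := lt_trans hA0 hAB
    have hτIoc : A / (2 * B) ∈ Set.Ioc (0 : ℝ) 1 := by
      constructor
      · positivity
      · rw [div_le_one (by positivity)]; linarith
    have h2 := hseg _ hτIoc
    have h3 : A / (2 * B) * B = A / 2 := by field_simp
    have h4 : A < A / (2 * B) * B := by rw [hA] at *; linarith [h2]
    rw [h3] at h4
    linarith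
  have h0le : gf b0E ≤ 0 := by
    have := h_ge 0 hKE_zero
    rwa [map_zero] at this
  have hgKE : ∀ y ∈ KE, 0 ≤ gf y := by
    intro y hy
    by_contra hneg
    push_neg at hneg
    have ht' : (0 : ℝ) < (gf b0E - 1) / gf y := div_pos_of_neg_of_neg (by linarith) hneg
    have h2 := h_ge _ (hKE_smul _ ht'.le y hy)
    rw [map_smul, smul_eq_mul, div_mul_cancel₀ _ (ne_of_lt hneg)] at h2
    linarith
  have hone_lt : gf b0E < gf oneE := hg' oneE hint_one
  have hone_pos : 0 < gf oneE := by
    rcases lt_or_ge 0 (gf oneE) with h | h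
    · exact h
    · exfalso
      have hone0 : gf oneE = 0 := le_antisymm h (hgKE oneE hone_KE)
      have hb0neg : gf b0E < 0 := by rw [← hone0]; exact hone_lt
      set τ : ℝ := r / (2 * (‖b0E‖ + 1)) with hτdef
      have hτpos : 0 < τ := by rw [hτdef]; positivity
      have hmem : oneE + τ • b0E ∈ KE := by
        refine hball ?_
        rw [Metric.mem_ball, dist_eq_norm]
        have heq2 : oneE + τ • b0E - oneE = τ • b0E := by module
        rw [heq2, norm_smul, Real.norm_eq_abs, abs_of_pos hτpos, hτdef]
        have h2 : 0 ≤ ‖b0E‖ := norm_nonneg _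
        rw [div_mul_eq_mul_div, div_lt_iff₀ (by positivity)]
        nlinarith
      have h3 := hgKE _ hmem
      rw [map_add, map_smul, smul_eq_mul, hone0, zero_add] at h3
      nlinarith
  -- the functional
  set L : SPolyLe n (2 * d) →ₗ[ℝ] ℝ :=
    (gf oneE)⁻¹ • ((gf : (Fin k → ℝ) →ₗ[ℝ] ℝ).comp (e : SPolyLe n (2 * d) →ₗ[ℝ] (Fin k → ℝ)))
    with hLdef
  have hLval : ∀ x : SPolyLe n (2 * d), L x = (gf oneE)⁻¹ * gf (e x) := by
    intro x
    rw [hLdef]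
    rfl
  have hdualL : InDualCone d C L := by
    intro f0 c0 hc0 hdeg0
    have hsd : sDeg (sig (f0 * c0 * ncStar f0)) ≤ 2 * d := le_trans (sDeg_sig_le _) hdeg0
    rw [lext, dif_pos hsd, hLval]
    refine mul_nonneg (inv_nonneg.mpr hone_pos.le) ?_
    exact hgKE _ (hKE_mem ⟨_, hsd⟩ (MCd_mem_single hc0 hdeg0))
  have hL1 : lext L 1 = 1 := by
    rw [lext, dif_pos h1le, hLval]
    show (gf oneE)⁻¹ * gf (e oneV) = 1
    rw [← honeE, inv_mul_cancel₀ hone_pos.ne']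
  have hupper : lext L a ≤ astar := by
    rw [lext, dif_pos ha]
    have haVsplit : (⟨a, ha⟩ : SPolyLe n (2 * d)) = b0V + astar • oneV := by
      rw [hb0V, ← haVdef]
      module
    rw [haVsplit, map_add, map_smul, smul_eq_mul]
    have hL1' : L oneV = 1 := by
      rw [← hL1, lext, dif_pos h1le]
    have hLb0 : L b0V ≤ 0 := by
      rw [hLval, ← hb0E]
      have h1 := mul_le_mul_of_nonneg_left h0le (inv_nonneg.mpr hone_pos.le)
      rwa [mul_zero] at h1
    rw [hL1', mul_one]
    linarith
  have hlower : astar ≤ lext L a := goalA L hdualL hL1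
  exact ⟨L, hdualL, hL1, le_antisymm hupper hlower, goalA⟩

end StatePoly
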